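/- Let F, F′, E, E′, G, G′ be small categories and let V be a cocomplete category. Let α : F → E, φ : F → G, α′ : F′ → E′, φ′ : F′ → G′, e : E → E′, f : F → F′ and g : G → G′ be functors, together with natural isomorphisms e ∘ α ≅ α′ ∘ f and φ′ ∘ f ≅ g ∘ φ. For X an object of G, write φ/X for the comma category whose objects are pairs (d, s) with d an object of F and s : φ(d) → X, and let T_X : φ/X → φ′/g(X) be the functor induced by f, g and the natural isomorphism φ′ ∘ f ≅ g ∘ φ. Assume that T_X is a final functor for every object X of G. Then for every functor H : E′ → V and every object X of G there is an isomorphism colim over φ′/g(X) of H ∘ α′ ∘ pr ≅ colim over φ/X of (H ∘ e) ∘ α ∘ pr (where pr denotes the projection of the comma category to F′ resp. F), and this isomorphism is natural in H. -/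

import Mathlib

open CategoryTheory Limits

/-- Given a map of spans of categories `(E ← F → G) → (E′ ← F′ → G′)` (only the data over
`G` is needed) and an object `X` of `G`, the induced functor `T_X : φ/X → φ′/g(X)` between
comma categories. -/
def inducedCommaFunctor {F F' G G' : Type} [SmallCategory F] [SmallCategory F']
    [SmallCategory G] [SmallCategory G'] (φ : F ⥤ G) (φ' : F' ⥤ G')
    (f : F ⥤ F') (g : G ⥤ G') (η : f ⋙ φ' ≅ φ ⋙ g) (X : G) :
    CostructuredArrow φ X ⥤ CostructuredArrow φ' (g.obj X) where
  obj d := CostructuredArrow.mk (η.hom.app d.left ≫ g.map d.hom)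
  map {d d'} k := CostructuredArrow.homMk (f.map k.left) (by
    have h := η.hom.naturality k.left
    dsimp at h ⊢
    rw [reassoc_of% h, ← g.map_comp, CostructuredArrow.w k])

/-- Comparison of natural operations along a map of spans.  Let `α : F → E`, `φ : F → G`,
`α′ : F′ → E′`, `φ′ : F′ → G′` be two spans, `e, f, g` a map between them (up to natural
isomorphism), and suppose all the induced functors `T_X : φ/X → φ′/g(X)` are final.  Then
for every `X` in `G` there is an isomorphism, natural in `H : E′ ⥤ V`,
`colim_{φ′/g(X)} H ∘ α′ ∘ pr ≅ colim_{φ/X} (H ∘ e) ∘ α ∘ pr`. -/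
theorem natural_operations_comparison {F F' E E' G G' : Type}
    [SmallCategory F] [SmallCategory F'] [SmallCategory E] [SmallCategory E']
    [SmallCategory G] [SmallCategory G']
    {V : Type*} [Category V] [HasColimitsOfSize.{0, 0} V]
    (α : F ⥤ E) (φ : F ⥤ G) (α' : F' ⥤ E') (φ' : F' ⥤ G')
    (e : E ⥤ E') (f : F ⥤ F') (g : G ⥤ G')
    (η₁ : α ⋙ e ≅ f ⋙ α') (η₂ : f ⋙ φ' ≅ φ ⋙ g)
    (hfinal : ∀ X : G, (inducedCommaFunctor φ φ' f g η₂ X).Final) (X : G) :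
    Nonempty
      (((Functor.whiskeringLeft (CostructuredArrow φ' (g.obj X)) E' V).obj
          (CostructuredArrow.proj φ' (g.obj X) ⋙ α') ⋙ colim) ≅
        ((Functor.whiskeringLeft (CostructuredArrow φ X) E' V).obj
          (CostructuredArrow.proj φ X ⋙ α ⋙ e) ⋙ colim)) := by
  have := hfinal X
  exact ⟨Functor.isoWhiskerLeft ((Functor.whiskeringLeft (CostructuredArrow φ' (g.obj X)) E' V).obj
      (CostructuredArrow.proj φ' (g.obj X) ⋙ α'))
      (Functor.Final.colimIso (inducedCommaFunctor φ φ' f g η₂ X)).symm ≪≫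
    Functor.isoWhiskerRight ((Functor.whiskeringLeft (CostructuredArrow φ X) E' V).mapIso
      (Functor.isoWhiskerLeft (CostructuredArrow.proj φ X) η₁.symm)) colim⟩
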